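/- For the points a = (1,0) and b = (−1,0) of S² one has q(a) ≠ q(b), yet every open subset of X containing q(a) intersects every open subset of X containing q(b). In particular, the twisted sphere X is not Hausdorff. -/

import Mathlib

noncomputable section

/-- The 2-sphere, realized as the unit sphere `{(c,z) : |c|² + z² = 1}` in `ℂ × ℝ`,
with the subspace topology. -/
def TwoSphere : Set (ℂ × ℝ) := {p | ‖p.1‖ ^ 2 + p.2 ^ 2 = 1}

/-- The relation `r₀` on `S²`: `r₀ (c,z) (c',z')` iff `z ≠ 0`, `c' = -c` and `z' = z`. -/
def sphRel (a b : TwoSphere) : Prop :=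
  a.1.2 ≠ 0 ∧ b.1.1 = -a.1.1 ∧ b.1.2 = a.1.2

/-- The twisted sphere `X`: the quotient of `S²` by the equivalence relation generated
by `r₀`, with the quotient topology. -/
abbrev TwistedSphere : Type := Quot (Relation.EqvGen sphRel)

/-- The quotient map `q : S² → X`. -/
abbrev sphQ : TwoSphere → TwistedSphere := Quot.mk (Relation.EqvGen sphRel)

/-- The point `a = (1,0)` of `S²`. -/
def ptA : TwoSphere := ⟨((1 : ℂ), (0 : ℝ)), by simp [TwoSphere]⟩

/-- The point `b = (-1,0)` of `S²`. -/
def ptB : TwoSphere := ⟨((-1 : ℂ), (0 : ℝ)), by simp [TwoSphere]⟩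

/-- Invariant of the equivalence relation: the `z`-coordinate is preserved, and a point
with `z = 0` is equivalent only to itself. -/
lemma sph_inv {x y : TwoSphere} (h : Relation.EqvGen sphRel x y) :
    x.1.2 = y.1.2 ∧ (x.1.2 = 0 → x = y) := by
  induction h with
  | rel a b hab => exact ⟨hab.2.2.symm, fun h0 => absurd h0 hab.1⟩
  | refl a => exact ⟨rfl, fun _ => rfl⟩
  | symm a b _ ih => exact ⟨ih.1.symm, fun h0 => (ih.2 (ih.1.trans h0)).symm⟩
  | trans a b c _ _ ih1 ih2 =>
      exact ⟨ih1.1.trans ih2.1, fun h0 => (ih1.2 h0).trans (ih2.2 (ih1.1.symm.trans h0))⟩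

lemma sph_ne : sphQ ptA ≠ sphQ ptB := by
  intro h
  have h2 : Relation.EqvGen sphRel ptA ptB :=
    ((Relation.EqvGen.is_equivalence sphRel).eqvGen_iff).mp (Quot.eqvGen_exact h)
  have := (sph_inv h2).2 rfl
  have : ((1 : ℂ), (0 : ℝ)) = ((-1 : ℂ), (0 : ℝ)) := congrArg Subtype.val this
  simp at this
  norm_num at this

lemma sph_meet : ∀ O₁ O₂ : Set TwistedSphere, IsOpen O₁ → IsOpen O₂ →
    sphQ ptA ∈ O₁ → sphQ ptB ∈ O₂ → (O₁ ∩ O₂).Nonempty := by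
  intro O₁ O₂ hO₁ hO₂ hA hB
  have hU₁ : IsOpen (sphQ ⁻¹' O₁) := hO₁.preimage continuous_quot_mk
  have hU₂ : IsOpen (sphQ ⁻¹' O₂) := hO₂.preimage continuous_quot_mk
  obtain ⟨ε₁, hε₁, hball₁⟩ := Metric.isOpen_iff.mp hU₁ ptA hA
  obtain ⟨ε₂, hε₂, hball₂⟩ := Metric.isOpen_iff.mp hU₂ ptB hB
  set δ : ℝ := min (min ε₁ ε₂ / 2) (1/2) with hδdef
  have hδpos : 0 < δ := by positivity
  have hδle : δ ≤ 1/2 := min_le_right _ _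
  have hδlt₁ : δ < ε₁ := lt_of_le_of_lt (min_le_left _ _)
    (by have := min_le_left ε₁ ε₂; linarith)
  have hδlt₂ : δ < ε₂ := lt_of_le_of_lt (min_le_left _ _)
    (by have := min_le_right ε₁ ε₂; linarith)
  set c : ℝ := Real.sqrt (1 - δ ^ 2) with hcdef
  have hδsq : 0 ≤ 1 - δ ^ 2 := by nlinarith
  have hcsq : c ^ 2 = 1 - δ ^ 2 := Real.sq_sqrt hδsq
  have hc0 : 0 ≤ c := Real.sqrt_nonneg _
  have hc1 : c ≤ 1 := by nlinarith
  have hcge : 1 - δ ^ 2 ≤ c := by nlinarith [Real.sqrt_nonneg (1 - δ^2)]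
  have hmem : ∀ s : ℝ, s = 1 ∨ s = -1 → ((((s * c : ℝ) : ℂ)) , δ) ∈ TwoSphere := by
    intro s hs
    have : ‖((s * c : ℝ) : ℂ)‖ ^ 2 = (s * c) ^ 2 := by
      rw [Complex.norm_real, Real.norm_eq_abs, sq_abs]
    simp only [TwoSphere, Set.mem_setOf_eq]
    rw [this]
    rcases hs with h | h <;> rw [h] <;> nlinarith
  set p : TwoSphere := ⟨((((1 : ℝ) * c : ℝ) : ℂ), δ), hmem 1 (Or.inl rfl)⟩ with hp
  set p' : TwoSphere := ⟨((((-1 : ℝ) * c : ℝ) : ℂ), δ), hmem (-1) (Or.inr rfl)⟩ with hp'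
  have hrel : sphRel p p' := by
    refine ⟨hδpos.ne', ?_, rfl⟩
    rw [hp, hp']
    push_cast
    ring
  have hqq : sphQ p = sphQ p' := Quot.sound (Relation.EqvGen.rel _ _ hrel)
  have hdc : dist ((((1:ℝ) * c : ℝ)) : ℂ) (1 : ℂ) = 1 - c := by
    rw [Complex.dist_eq]
    have : (((1:ℝ) * c : ℝ) : ℂ) - 1 = ((c - 1 : ℝ) : ℂ) := by push_cast; ring
    rw [this, Complex.norm_real, Real.norm_eq_abs, abs_of_nonpos (by linarith)]
    ring
  have hdc' : dist ((((-1:ℝ) * c : ℝ)) : ℂ) (-1 : ℂ) = 1 - c := by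
    rw [Complex.dist_eq]
    have : (((-1:ℝ) * c : ℝ) : ℂ) - (-1) = ((1 - c : ℝ) : ℂ) := by push_cast; ring
    rw [this, Complex.norm_real, Real.norm_eq_abs, abs_of_nonneg (by linarith)]
  have hsmall : 1 - c < δ + δ := by nlinarith
  have hpin : p ∈ Metric.ball ptA ε₁ := by
    rw [Metric.mem_ball, Subtype.dist_eq, Prod.dist_eq]
    simp only [ptA]
    apply max_lt
    · rw [hdc]; nlinarith
    · rw [Real.dist_eq]
      rw [abs_of_nonneg (by linarith : (0:ℝ) ≤ δ - 0)]; linarith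
  have hpin' : p' ∈ Metric.ball ptB ε₂ := by
    rw [Metric.mem_ball, Subtype.dist_eq, Prod.dist_eq]
    simp only [ptB]
    apply max_lt
    · rw [hdc']; nlinarith
    · rw [Real.dist_eq]
      rw [abs_of_nonneg (by linarith : (0:ℝ) ≤ δ - 0)]; linarith
  exact ⟨sphQ p, hball₁ hpin, hqq ▸ hball₂ hpin'⟩

/-- `q(a) ≠ q(b)` for `a = (1,0)` and `b = (-1,0)`, yet every open set
containing `q(a)` intersects every open set containing `q(b)`; in particular the
twisted sphere `X` is not Hausdorff. -/
theorem stmt_7 :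
    sphQ ptA ≠ sphQ ptB ∧
    (∀ O₁ O₂ : Set TwistedSphere, IsOpen O₁ → IsOpen O₂ →
      sphQ ptA ∈ O₁ → sphQ ptB ∈ O₂ → (O₁ ∩ O₂).Nonempty) ∧
    ¬ T2Space TwistedSphere := by
  refine ⟨sph_ne, sph_meet, ?_⟩
  intro hT2
  obtain ⟨U, V, hU, hV, hAU, hBV, hUV⟩ := t2_separation sph_ne
  obtain ⟨x, hx₁, hx₂⟩ := sph_meet U V hU hV hAU hBV
  exact hUV.ne_of_mem hx₁ hx₂ rfl
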